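/- Let V : ℝ → [0,∞) be C², convex, even with V(0)=0, satisfying the local behavior hypothesis with constants C₀, α > 0, and the growth hypothesis: there are c₀, R₀ > 0 and β > −1 with V'(z) ≥ c₀ z^{1+β} for z ≥ R₀. Set b_ε := ε^{1/(2+α)}, C_ε := ∫_ℝ exp(−2V(y)/ε) dy and C := ∫_ℝ exp(−2C₀|z|^{2+α}/(2+α)) dz. Then lim_{ε→0} C_ε / b_ε = C. -/

import Mathlib

open MeasureTheory Filter

open Set


lemma my_integrable_exp_neg_abs (c : ℝ) (hc : 0 < c) :
    Integrable (fun x : ℝ => Real.exp (-(c * |x|))) := by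
  have hIoi : IntegrableOn (fun x : ℝ => Real.exp (-(c * |x|))) (Set.Ioi 0) := by
    refine (exp_neg_integrableOn_Ioi 0 hc).congr_fun ?_ measurableSet_Ioi
    intro x hx
    simp [abs_of_pos (show (0:ℝ) < x from hx), neg_mul]
  have hIic : IntegrableOn (fun x : ℝ => Real.exp (-(c * |x|))) (Set.Iic 0) := by
    rw [← Measure.map_neg_eq_self (volume : Measure ℝ)]
    have m : MeasurableEmbedding fun x : ℝ => -x :=
      (Homeomorph.neg ℝ).measurableEmbedding
    rw [m.integrableOn_map_iff]
    simp_rw [Function.comp_def, abs_neg, neg_preimage, neg_Iic, neg_zero]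
    exact Iff.mpr integrableOn_Ici_iff_integrableOn_Ioi hIoi
  have h := hIic.union hIoi
  rwa [Set.Iic_union_Ioi, integrableOn_univ] at h


lemma my_core_estimate (V : ℝ → ℝ) (C₀ α : ℝ) (hα : 0 < α)
    (hV2 : ContDiff ℝ 2 V) (hV0 : V 0 = 0)
    (hloc : ∀ K > (0:ℝ), ∀ δ > (0:ℝ), ∃ l₀ > (0:ℝ), ∀ l : ℝ, 0 < l → l < l₀ →
      ∀ z : ℝ, |z| ≤ K →
        |deriv V (l * z) / l ^ (1 + α) - C₀ * |z| ^ (1 + α) * Real.sign z| < δ) :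
    ∀ z : ℝ, 0 < z → ∀ δ > (0:ℝ), ∃ l₀ > (0:ℝ), ∀ l : ℝ, 0 < l → l < l₀ →
      |V (l * z) / l ^ ((2:ℝ) + α) - C₀ * z ^ ((2:ℝ) + α) / (2 + α)| ≤ δ * z := by
  intro z hz δ hδ
  obtain ⟨l₀, hl₀, H⟩ := hloc z hz δ hδ
  refine ⟨l₀, hl₀, fun l hl hll => ?_⟩
  have hVd : Differentiable ℝ V := hV2.differentiable two_ne_zero
  have hV'c : Continuous (deriv V) := hV2.continuous_deriv one_le_two
  have key : ∫ t in (0:ℝ)..z, deriv V (l * t) * l = V (l * z) - V (l * 0) := by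
    refine intervalIntegral.integral_eq_sub_of_hasDerivAt (f := fun t => V (l * t))
      (f' := fun t => deriv V (l * t) * l) (fun t _ => ?_) ?_
    · have h1 : HasDerivAt V (deriv V (l * t)) (l * t) := (hVd (l * t)).hasDerivAt
      have h2 : HasDerivAt (fun y : ℝ => l * y) l t := by
        simpa using (hasDerivAt_id t).const_mul l
      exact h1.comp t h2
    · exact ((hV'c.comp (continuous_const.mul continuous_id)).mul continuous_const).intervalIntegrable _ _
  rw [mul_zero, hV0, sub_zero] at key
  have hlalt : (0:ℝ) < l ^ ((1:ℝ) + α) := Real.rpow_pos_of_pos hl _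
  have hl2 : l ^ ((2:ℝ) + α) = l ^ ((1:ℝ) + α) * l := by
    have h : (2:ℝ) + α = (1 + α) + 1 := by ring
    rw [h, Real.rpow_add_one hl.ne']
  have e2 : V (l * z) / l ^ ((2:ℝ) + α) = ∫ t in (0:ℝ)..z, deriv V (l * t) / l ^ ((1:ℝ) + α) := by
    rw [intervalIntegral.integral_div, ← key, intervalIntegral.integral_mul_const, hl2]
    field_simp
  have e3 : ∫ t in (0:ℝ)..z, C₀ * t ^ ((1:ℝ) + α) = C₀ * z ^ ((2:ℝ) + α) / (2 + α) := by
    rw [intervalIntegral.integral_const_mul, integral_rpow (Or.inl (by linarith))]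
    rw [Real.zero_rpow (by positivity : (1:ℝ) + α + 1 ≠ 0)]
    have h : (1:ℝ) + α + 1 = 2 + α := by ring
    rw [h, sub_zero, mul_div_assoc]
  have hint1 : IntervalIntegrable (fun t => deriv V (l * t) / l ^ ((1:ℝ) + α)) volume 0 z :=
    ((hV'c.comp (continuous_const.mul continuous_id)).div_const _).intervalIntegrable _ _
  have hcont2 : Continuous (fun t : ℝ => C₀ * t ^ ((1:ℝ) + α)) := by
    refine continuous_const.mul ?_
    rw [continuous_iff_continuousAt]
    exact fun t => Real.continuousAt_rpow_const t _ (Or.inr (by positivity))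
  have hint2 : IntervalIntegrable (fun t : ℝ => C₀ * t ^ ((1:ℝ) + α)) volume 0 z :=
    hcont2.intervalIntegrable _ _
  rw [e2, ← e3, ← intervalIntegral.integral_sub hint1 hint2]
  have hb := intervalIntegral.norm_integral_le_of_norm_le_const
    (a := 0) (b := z) (C := δ)
    (f := fun t => deriv V (l * t) / l ^ ((1:ℝ) + α) - C₀ * t ^ ((1:ℝ) + α)) ?_
  · rw [Real.norm_eq_abs] at hb
    simpa [abs_of_pos hz] using hb
  · intro t ht
    rw [Set.uIoc_of_le hz.le] at ht
    have ht0 : 0 < t := ht.1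
    have habs : |t| ≤ z := by rw [abs_of_pos ht0]; exact ht.2
    have := H l hl hll t habs
    rw [Real.sign_of_pos ht0, mul_one, abs_of_pos ht0] at this
    rw [Real.norm_eq_abs]
    exact this.le


lemma my_pointwise (V : ℝ → ℝ) (C₀ α : ℝ) (hα : 0 < α)
    (hV2 : ContDiff ℝ 2 V) (hV0 : V 0 = 0)
    (hloc : ∀ K > (0:ℝ), ∀ δ > (0:ℝ), ∃ l₀ > (0:ℝ), ∀ l : ℝ, 0 < l → l < l₀ →
      ∀ z : ℝ, |z| ≤ K →
        |deriv V (l * z) / l ^ (1 + α) - C₀ * |z| ^ (1 + α) * Real.sign z| < δ)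
    (core : ∀ z : ℝ, 0 < z → ∀ δ > (0:ℝ), ∃ l₀ > (0:ℝ), ∀ l : ℝ, 0 < l → l < l₀ →
      |V (l * z) / l ^ ((2:ℝ) + α) - C₀ * z ^ ((2:ℝ) + α) / (2 + α)| ≤ δ * z) :
    ∀ z : ℝ, 0 ≤ z → Tendsto (fun l => V (l * z) / l ^ ((2:ℝ) + α))
      (nhdsWithin 0 (Set.Ioi 0)) (nhds (C₀ * z ^ ((2:ℝ) + α) / (2 + α))) := by
  intro z hz
  rcases eq_or_lt_of_le hz with h0 | hzpos
  · subst h0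
    simp only [mul_zero, hV0, zero_div, Real.zero_rpow (by positivity : (2:ℝ) + α ≠ 0),
      mul_zero, zero_div]
    exact tendsto_const_nhds
  · rw [Metric.tendsto_nhdsWithin_nhds]
    intro η hη
    have hδ : (0:ℝ) < η / (2 * z) := by positivity
    obtain ⟨l₀, hl₀, H⟩ := core z hzpos _ hδ
    refine ⟨l₀, hl₀, fun {l} hlmem hd => ?_⟩
    have hl : 0 < l := hlmem
    have hll : l < l₀ := by
      rw [Real.dist_eq, sub_zero, abs_of_pos hl] at hd; exact hd
    rw [Real.dist_eq]
    calc |V (l * z) / l ^ ((2:ℝ) + α) - C₀ * z ^ ((2:ℝ) + α) / (2 + α)|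
        ≤ η / (2 * z) * z := H l hl hll
      _ = η / 2 := by field_simp
      _ < η := by linarith


/-- convergence of the normalizing constants `C_ε/b_ε → C`. -/
theorem stmt_8
    (V : ℝ → ℝ) (C₀ α c₀ R₀ β : ℝ)
    (hC₀ : 0 < C₀) (hα : 0 < α) (hc₀ : 0 < c₀) (hR₀ : 0 < R₀) (hβ : -1 < β)
    (hV2 : ContDiff ℝ 2 V) (hconv : ConvexOn ℝ Set.univ V)
    (heven : ∀ z : ℝ, V (-z) = V z) (hV0 : V 0 = 0) (hVnn : ∀ z : ℝ, 0 ≤ V z)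
    (hloc : ∀ K > (0:ℝ), ∀ δ > (0:ℝ), ∃ l₀ > (0:ℝ), ∀ l : ℝ, 0 < l → l < l₀ →
      ∀ z : ℝ, |z| ≤ K →
        |deriv V (l * z) / l ^ (1 + α) - C₀ * |z| ^ (1 + α) * Real.sign z| < δ)
    (hgrow : ∀ z : ℝ, R₀ ≤ z → c₀ * z ^ (1 + β) ≤ deriv V z) :
    Tendsto
      (fun ε : ℝ => (∫ y : ℝ, Real.exp (-2 * V y / ε)) / ε ^ (1 / (2 + α)))
      (nhdsWithin 0 (Set.Ioi 0))
      (nhds (∫ z : ℝ, Real.exp (-2 * C₀ * |z| ^ (2 + α) / (2 + α)))) := by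
  have core : ∀ z : ℝ, 0 < z → ∀ δ > (0:ℝ), ∃ l₀ > (0:ℝ), ∀ l : ℝ, 0 < l → l < l₀ →
      |V (l * z) / l ^ ((2:ℝ) + α) - C₀ * z ^ ((2:ℝ) + α) / (2 + α)| ≤ δ * z :=
    my_core_estimate V C₀ α hα hV2 hV0 hloc
  have ptwise := my_pointwise V C₀ α hα hV2 hV0 hloc core
  have h2α : (0:ℝ) < 2 + α := by linarith
  set κ := C₀ / (2 * (2 + α)) with hκdef
  have hκ : 0 < κ := by positivity
  -- lower bound near 0
  obtain ⟨l₁, hl₁, Hlow⟩ := core 1 one_pos κ hκ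
  have hVl : ∀ l : ℝ, 0 < l → l < l₁ → κ * l ^ ((2:ℝ) + α) ≤ V l := by
    intro l hl hll
    have h := Hlow l hl hll
    rw [mul_one, Real.one_rpow, mul_one] at h
    have h' := abs_le.1 h
    have hP : (0:ℝ) < l ^ ((2:ℝ) + α) := Real.rpow_pos_of_pos hl _
    have h2 : κ ≤ V l / l ^ ((2:ℝ) + α) := by
      have : C₀ / (2 + α) - κ = κ := by rw [hκdef]; field_simp; ring
      nlinarith [h'.1]
    calc κ * l ^ ((2:ℝ) + α) ≤ V l / l ^ ((2:ℝ) + α) * l ^ ((2:ℝ) + α) := by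
          exact mul_le_mul_of_nonneg_right h2 hP.le
      _ = V l := by field_simp
  -- evenness in the form we need
  have hVabs : ∀ l z : ℝ, V (l * z) = V (l * |z|) := by
    intro l z
    rcases abs_cases z with ⟨h, _⟩ | ⟨h, _⟩
    · rw [h]
    · rw [h, mul_neg, heven]
  -- global lower bound
  have lower : ∀ l : ℝ, 0 < l → l < l₁ → ∀ z : ℝ,
      κ * (|z| - 1) ≤ V (l * z) / l ^ ((2:ℝ) + α) := by
    intro l hl hll z
    have hP : (0:ℝ) < l ^ ((2:ℝ) + α) := Real.rpow_pos_of_pos hl _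
    rcases le_or_gt |z| 1 with h | h
    · have h1 : κ * (|z| - 1) ≤ 0 := mul_nonpos_of_nonneg_of_nonpos hκ.le (by linarith)
      exact h1.trans (div_nonneg (hVnn _) hP.le)
    · have h0 : (0:ℝ) < |z| := lt_trans one_pos h
      have hcx : V l ≤ V (l * |z|) / |z| := by
        have hc := hconv.2 (Set.mem_univ (l * |z|)) (Set.mem_univ (0:ℝ))
          (by positivity : (0:ℝ) ≤ 1 / |z|) (by
            have : 1 / |z| ≤ 1 := by rw [div_le_one h0]; exact h.le
            linarith : (0:ℝ) ≤ 1 - 1 / |z|)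
          (by ring)
        simp only [smul_eq_mul, mul_zero, add_zero, hV0] at hc
        have he : 1 / |z| * (l * |z|) = l := by field_simp
        rw [he] at hc
        calc V l ≤ 1 / |z| * V (l * |z|) := hc
          _ = V (l * |z|) / |z| := by ring
      have hVlz : |z| * V l ≤ V (l * |z|) := by
        rw [← le_div_iff₀' h0]; exact hcx
      rw [hVabs l z]
      have hk : κ * |z| ≤ V (l * |z|) / l ^ ((2:ℝ) + α) := by
        rw [le_div_iff₀ hP]
        calc κ * |z| * l ^ ((2:ℝ) + α) = |z| * (κ * l ^ ((2:ℝ) + α)) := by ring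
          _ ≤ |z| * V l := by
              exact mul_le_mul_of_nonneg_left (hVl l hl hll) h0.le
          _ ≤ V (l * |z|) := hVlz
      nlinarith
  -- the rescaled family
  set b : ℝ → ℝ := fun ε => ε ^ ((1:ℝ) / (2 + α)) with hbdef
  have hbpos : ∀ ε : ℝ, 0 < ε → 0 < b ε := fun ε hε => Real.rpow_pos_of_pos hε _
  have hbeq : ∀ ε : ℝ, 0 < ε → (b ε) ^ ((2:ℝ) + α) = ε := by
    intro ε hε
    rw [hbdef]
    rw [← Real.rpow_mul hε.le, one_div, inv_mul_cancel₀ h2α.ne', Real.rpow_one]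
  set F : ℝ → ℝ → ℝ := fun ε z => Real.exp (-2 * V (b ε * z) / ε) with hFdef
  -- change of variables
  have hevq : ∀ ε : ℝ, ε ∈ Set.Ioi (0:ℝ) →
      (∫ z : ℝ, F ε z) = (∫ y : ℝ, Real.exp (-2 * V y / ε)) / ε ^ ((1:ℝ) / (2 + α)) := by
    intro ε hε
    have hb := hbpos ε hε
    have h := Measure.integral_comp_mul_left (fun y => Real.exp (-2 * V y / ε)) (b ε)
    rw [hFdef]
    rw [h, abs_of_pos (inv_pos.2 hb), smul_eq_mul, ← div_eq_inv_mul]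
  -- main convergence via dominated convergence
  have main : Tendsto (fun ε => ∫ z : ℝ, F ε z) (nhdsWithin 0 (Set.Ioi 0))
      (nhds (∫ z : ℝ, Real.exp (-2 * C₀ * |z| ^ ((2:ℝ) + α) / (2 + α)))) := by
    apply tendsto_integral_filter_of_dominated_convergence
      (bound := fun z => Real.exp (2 * κ) * Real.exp (-(2 * κ * |z|)))
    · filter_upwards [self_mem_nhdsWithin] with ε (hε : (0:ℝ) < ε)
      apply Continuous.aestronglyMeasurable
      exact Real.continuous_exp.comp
        (((continuous_const.mul (hV2.continuous.comp
          (continuous_const.mul continuous_id))).div_const ε))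
    · have hmem : Set.Ioo (0:ℝ) (l₁ ^ ((2:ℝ) + α)) ∈ nhdsWithin (0:ℝ) (Set.Ioi 0) :=
        Ioo_mem_nhdsGT_of_mem ⟨le_refl 0, Real.rpow_pos_of_pos hl₁ _⟩
      filter_upwards [hmem] with ε hε
      have hε0 : 0 < ε := hε.1
      have hb0 := hbpos ε hε0
      have hbl : b ε < l₁ := by
        have h1 : b ε ^ ((2:ℝ) + α) < l₁ ^ ((2:ℝ) + α) := by
          rw [hbeq ε hε0]; exact hε.2
        by_contra hcon
        push_neg at hcon
        exact absurd (Real.rpow_le_rpow hl₁.le hcon h2α.le) (not_le.2 h1)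
      refine Eventually.of_forall fun z => ?_
      have hlow := lower (b ε) hb0 hbl z
      rw [hbeq ε hε0] at hlow
      have harg : -2 * V (b ε * z) / ε ≤ 2 * κ + -(2 * κ * |z|) := by
        have hm : -2 * V (b ε * z) / ε = -2 * (V (b ε * z) / ε) := by ring
        rw [hm]; nlinarith
      rw [hFdef]
      simp only [Real.norm_eq_abs, Real.abs_exp]
      rw [← Real.exp_add]
      exact Real.exp_le_exp.2 harg
    · exact (my_integrable_exp_neg_abs (2 * κ) (by positivity)).const_mul _
    · refine Eventually.of_forall fun z => ?_
      have hbt : Tendsto b (nhdsWithin 0 (Set.Ioi 0)) (nhdsWithin 0 (Set.Ioi 0)) := by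
        rw [tendsto_nhdsWithin_iff]
        constructor
        · have hc : ContinuousAt (fun x : ℝ => x ^ ((1:ℝ) / (2 + α))) 0 :=
            Real.continuousAt_rpow_const 0 _ (Or.inr (by positivity))
          have := hc.tendsto.mono_left (nhdsWithin_le_nhds (s := Set.Ioi (0:ℝ)))
          rwa [Real.zero_rpow (by positivity : (1:ℝ) / (2 + α) ≠ 0)] at this
        · filter_upwards [self_mem_nhdsWithin] with ε (hε : (0:ℝ) < ε)
          exact hbpos ε hε
      have h1 := (ptwise |z| (abs_nonneg z)).comp hbt
      have h2 : Tendsto (fun ε => V (b ε * z) / ε) (nhdsWithin 0 (Set.Ioi 0))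
          (nhds (C₀ * |z| ^ ((2:ℝ) + α) / (2 + α))) := by
        refine h1.congr' ?_
        filter_upwards [self_mem_nhdsWithin] with ε (hε : (0:ℝ) < ε)
        show V (b ε * |z|) / (b ε) ^ ((2:ℝ) + α) = V (b ε * z) / ε
        rw [← hVabs, hbeq ε hε]
      have h3 : Tendsto (fun ε => Real.exp (-2 * (V (b ε * z) / ε)))
          (nhdsWithin 0 (Set.Ioi 0))
          (nhds (Real.exp (-2 * (C₀ * |z| ^ ((2:ℝ) + α) / (2 + α))))) :=
        (Real.continuous_exp.continuousAt.tendsto).comp (h2.const_mul (-2))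
      have h4 : (fun ε => Real.exp (-2 * (V (b ε * z) / ε))) = fun ε => F ε z := by
        funext ε; rw [hFdef]; ring_nf
      rw [h4] at h3
      have h5 : Real.exp (-2 * (C₀ * |z| ^ ((2:ℝ) + α) / (2 + α)))
          = Real.exp (-2 * C₀ * |z| ^ ((2:ℝ) + α) / (2 + α)) := by ring_nf
      rwa [h5] at h3
  refine main.congr' ?_
  filter_upwards [self_mem_nhdsWithin] with ε (hε : (0:ℝ) < ε)
  exact hevq ε hε
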